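/- For every 0 < α < 1 and all finitely supported sequences f, g : ℕ₀ → ℂ: q_α(f*g) ≤ (2^{α+1}·(1 + (1-α)/(2(1+α)))^α − 1) · q_α(f) · q_α(g). -/

import Mathlib

/-- The Cesàro kernel `k^α(n) = Γ(n+α)/(Γ(α)·Γ(n+1))`. -/
noncomputable def cesK (α : ℝ) (n : ℕ) : ℝ :=
  Real.Gamma ((n : ℝ) + α) / (Real.Gamma α * Real.Gamma ((n : ℝ) + 1))

/-- The Weyl sum of order `α`: `W^{-α}f(n) = ∑_{j=n}^∞ k^α(j-n)·f(j)`. -/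
noncomputable def weylSum (α : ℝ) (f : ℕ → ℂ) : ℕ → ℂ :=
  fun n => ∑ᶠ j : ℕ, (cesK α j : ℂ) * f (j + n)

/-- The forward difference operator `Δh(n) = h(n+1) - h(n)`. -/
def fdiff (f : ℕ → ℂ) : ℕ → ℂ := fun n => f (n + 1) - f n

/-- The Weyl difference of order `α > 0`:
`W^α f(n) = (-1)^m Δ^m W^{-(m-α)} f(n)` with `m = [α]+1`; and `W^0 f = f`. -/
noncomputable def weylDiff (α : ℝ) (f : ℕ → ℂ) : ℕ → ℂ :=
  if α = 0 then f
  else fun n => (-1 : ℂ) ^ (⌊α⌋₊ + 1) * fdiff^[⌊α⌋₊ + 1] (weylSum ((⌊α⌋₊ : ℝ) + 1 - α) f) n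

/-- Convolution of sequences: `(f*g)(n) = ∑_{j=0}^n f(n-j)·g(j)`. -/
noncomputable def conv (f g : ℕ → ℂ) (n : ℕ) : ℂ :=
  ∑ j ∈ Finset.range (n + 1), f (n - j) * g j

/-- `q_α(f) = ∑_{n=0}^∞ k^{α+1}(n)·|W^α f(n)|`, a finite sum for finitely supported `f`. -/
noncomputable def qA (α : ℝ) (f : ℕ → ℂ) : ℝ :=
  ∑ᶠ n : ℕ, cesK (α + 1) n * ‖weylDiff α f n‖


lemma cesK_zero {a : ℝ} (ha : 0 < a) : cesK a 0 = 1 := by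
  simp [cesK, Real.Gamma_one, div_self (ne_of_gt (Real.Gamma_pos_of_pos ha))]

lemma gamma_nat_pos (n : ℕ) : 0 < Real.Gamma ((n : ℝ) + 1) :=
  Real.Gamma_pos_of_pos (by positivity)

lemma cesK_pos {a : ℝ} (ha : 0 < a) (n : ℕ) : 0 < cesK a n := by
  have h1 : 0 < Real.Gamma ((n : ℝ) + a) := Real.Gamma_pos_of_pos (by positivity)
  have h2 := Real.Gamma_pos_of_pos ha
  have h3 := gamma_nat_pos n
  exact div_pos h1 (mul_pos h2 h3)

lemma cesK_succ {a : ℝ} (ha : 0 < a) (n : ℕ) :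
    cesK a (n + 1) = cesK a n * (((n : ℝ) + a) / ((n : ℝ) + 1)) := by
  have hna : ((n : ℝ) + a) ≠ 0 := by positivity
  have h1 : Real.Gamma (((n : ℕ) + 1 : ℕ) + a) = ((n : ℝ) + a) * Real.Gamma ((n : ℝ) + a) := by
    push_cast
    rw [show (n : ℝ) + 1 + a = ((n : ℝ) + a) + 1 by ring, Real.Gamma_add_one hna]
  have h2 : Real.Gamma ((n : ℝ) + 1 + 1) = ((n : ℝ) + 1) * Real.Gamma ((n : ℝ) + 1) := by
    rw [Real.Gamma_add_one (by positivity : ((n:ℝ)+1) ≠ 0)]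
  have hga := ne_of_gt (Real.Gamma_pos_of_pos ha)
  have hgn := ne_of_gt (gamma_nat_pos n)
  rw [cesK, cesK, h1]
  push_cast
  rw [h2]
  field_simp

lemma cesK_one (n : ℕ) : cesK 1 n = 1 := by
  simp [cesK, Real.Gamma_one, div_self (ne_of_gt (gamma_nat_pos n))]

open Finset in
lemma cesK_vandermonde {a b : ℝ} (ha : 0 < a) (hb : 0 < b) (n : ℕ) :
    ∑ p ∈ Finset.HasAntidiagonal.antidiagonal n, cesK a p.1 * cesK b p.2 = cesK (a + b) n := by
  induction n with
  | zero => simp [cesK_zero ha, cesK_zero hb, cesK_zero (by positivity : (0:ℝ) < a + b)]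
  | succ n ih =>
    have key : ((n : ℝ) + 1) * ∑ p ∈ Finset.HasAntidiagonal.antidiagonal (n+1), cesK a p.1 * cesK b p.2
        = ((n : ℝ) + a + b) * ∑ p ∈ Finset.HasAntidiagonal.antidiagonal n, cesK a p.1 * cesK b p.2 := by
      rw [Finset.mul_sum, Finset.mul_sum]
      have hsplit : ∀ p ∈ Finset.HasAntidiagonal.antidiagonal (n+1),
          ((n : ℝ) + 1) * (cesK a p.1 * cesK b p.2)
          = (p.1 : ℝ) * cesK a p.1 * cesK b p.2 + cesK a p.1 * ((p.2 : ℝ) * cesK b p.2) := by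
        intro p hp
        have := Finset.HasAntidiagonal.mem_antidiagonal.mp hp
        have : ((p.1 : ℝ) + (p.2 : ℝ)) = (n : ℝ) + 1 := by exact_mod_cast congrArg Nat.cast this
        rw [← this]; ring
      rw [Finset.sum_congr rfl hsplit, Finset.sum_add_distrib]
      have e1 : ∑ p ∈ Finset.HasAntidiagonal.antidiagonal (n+1), (p.1 : ℝ) * cesK a p.1 * cesK b p.2
          = ∑ p ∈ Finset.HasAntidiagonal.antidiagonal n, ((p.1 : ℝ) + a) * cesK a p.1 * cesK b p.2 := by
        rw [Finset.Nat.antidiagonal_succ, Finset.sum_cons, Finset.sum_map]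
        simp only [Nat.cast_zero, zero_mul, zero_add, Function.Embedding.prodMap,
          Function.Embedding.coeFn_mk, Prod.map, Function.Embedding.refl_apply]
        refine Finset.sum_congr rfl ?_
        intro p _
        have : ((Nat.succ p.1 : ℕ) : ℝ) * cesK a (Nat.succ p.1) = ((p.1 : ℝ) + a) * cesK a p.1 := by
          rw [Nat.succ_eq_add_one, cesK_succ ha]
          push_cast
          field_simp
        simp only [Nat.succ_eq_add_one] at this ⊢
        push_cast at this ⊢
        rw [this]
      have e2 : ∑ p ∈ Finset.HasAntidiagonal.antidiagonal (n+1), cesK a p.1 * ((p.2 : ℝ) * cesK b p.2)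
          = ∑ p ∈ Finset.HasAntidiagonal.antidiagonal n, cesK a p.1 * (((p.2 : ℝ) + b) * cesK b p.2) := by
        rw [Finset.Nat.antidiagonal_succ', Finset.sum_cons, Finset.sum_map]
        simp only [Nat.cast_zero, zero_mul, mul_zero, zero_add, Function.Embedding.prodMap,
          Function.Embedding.coeFn_mk, Prod.map, Function.Embedding.refl_apply]
        refine Finset.sum_congr rfl ?_
        intro p _
        have : ((Nat.succ p.2 : ℕ) : ℝ) * cesK b (Nat.succ p.2) = ((p.2 : ℝ) + b) * cesK b p.2 := by
          rw [Nat.succ_eq_add_one, cesK_succ hb]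
          push_cast
          field_simp
        simp only [Nat.succ_eq_add_one] at this ⊢
        push_cast at this ⊢
        rw [this]
      rw [e1, e2, ← Finset.sum_add_distrib]
      refine Finset.sum_congr rfl ?_
      intro p hp
      have hc : ((p.1 : ℝ) + (p.2 : ℝ)) = (n : ℝ) := by
        exact_mod_cast congrArg Nat.cast (Finset.HasAntidiagonal.mem_antidiagonal.mp hp)
      linear_combination cesK a p.1 * cesK b p.2 * hc
    have hne : ((n : ℝ) + 1) ≠ 0 := by positivity
    have : ∑ p ∈ Finset.HasAntidiagonal.antidiagonal (n+1), cesK a p.1 * cesK b p.2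
        = ((n : ℝ) + a + b) / ((n : ℝ) + 1) * cesK (a+b) n := by
      rw [← ih, div_mul_eq_mul_div, eq_div_iff hne, mul_comm]
      exact key
    rw [this, cesK_succ (by positivity : (0:ℝ) < a + b)]
    ring

lemma cesK_vandermonde_range {a b : ℝ} (ha : 0 < a) (hb : 0 < b) (n : ℕ) :
    ∑ r ∈ Finset.range (n+1), cesK a r * cesK b (n - r) = cesK (a + b) n := by
  rw [← Finset.Nat.sum_antidiagonal_eq_sum_range_succ_mk (fun p => cesK a p.1 * cesK b p.2)]
  exact cesK_vandermonde ha hb n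


variable {α : ℝ}

lemma k1_sum_k0 (h0 : 0 < α) (n : ℕ) :
    ∑ s ∈ Finset.range (n+1), cesK α s = cesK (α + 1) n := by
  have := cesK_vandermonde_range h0 one_pos n
  simpa [cesK_one] using this

lemma k0_succ_eq (h0 : 0 < α) (n : ℕ) :
    cesK α (n+1) = cesK (α + 1) n * (α / ((n : ℝ) + 1)) := by
  have h2 : cesK α (n+1) = cesK (α+1) (n+1) - cesK (α+1) n := by
    have ha := k1_sum_k0 (α := α) h0 n
    have hb := k1_sum_k0 (α := α) h0 (n+1)
    rw [Finset.sum_range_succ, ha] at hb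
    linarith
  rw [h2, cesK_succ (by positivity : (0:ℝ) < α + 1)]
  have hne : ((n:ℝ) + 1) ≠ 0 := by positivity
  field_simp
  ring

lemma k1_partial_sum (h0 : 0 < α) (i : ℕ) :
    ∑ m ∈ Finset.range i, cesK (α + 1) m = (i : ℝ) / (1 + α) * cesK (α + 1) i := by
  induction i with
  | zero => simp
  | succ i ih =>
    rw [Finset.sum_range_succ, ih, cesK_succ (by positivity : (0:ℝ) < α + 1)]
    have h2 : ((i : ℝ) + 1) ≠ 0 := by positivity
    have h3 : (1 + α) ≠ 0 := by positivity
    field_simp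
    push_cast
    ring

lemma k0_anti (h0 : 0 < α) (h1 : α < 1) : ∀ {m n : ℕ}, m ≤ n → cesK α n ≤ cesK α m := by
  intro m n h
  induction n with
  | zero => simp_all
  | succ n ih =>
    rcases Nat.eq_or_lt_of_le h with h' | h'
    · rw [h']
    · have hmn : m ≤ n := Nat.lt_succ_iff.mp h'
      refine le_trans ?_ (ih hmn)
      rw [cesK_succ h0]
      have hp := cesK_pos h0 n
      have hr : ((n : ℝ) + α) / ((n : ℝ) + 1) ≤ 1 := by
        rw [div_le_one (by positivity)]; linarith
      nlinarith

lemma k1_mono (h0 : 0 < α) : ∀ {m n : ℕ}, m ≤ n → cesK (α+1) m ≤ cesK (α+1) n := by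
  intro m n h
  induction n with
  | zero => simp_all
  | succ n ih =>
    rcases Nat.eq_or_lt_of_le h with h' | h'
    · rw [h']
    · have hmn : m ≤ n := Nat.lt_succ_iff.mp h'
      refine le_trans (ih hmn) ?_
      rw [cesK_succ (by positivity : (0:ℝ) < α + 1)]
      have hp := cesK_pos (by positivity : (0:ℝ) < α + 1) n
      have hr : (1:ℝ) ≤ ((n : ℝ) + (α+1)) / ((n : ℝ) + 1) := by
        rw [le_div_iff₀ (by positivity)]; linarith
      nlinarith

lemma k1_ge_one (h0 : 0 < α) (n : ℕ) : (1:ℝ) ≤ cesK (α+1) n := by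
  have := k1_mono (α := α) h0 (Nat.zero_le n)
  rwa [cesK_zero (by positivity : (0:ℝ) < α + 1)] at this

lemma k0_le_one (h0 : 0 < α) (h1 : α < 1) (n : ℕ) : cesK α n ≤ 1 := by
  have := k0_anti (α := α) h0 h1 (Nat.zero_le n)
  rwa [cesK_zero h0] at this

lemma art_scale {t a : ℝ} (ht0 : 0 ≤ t) (ht1 : t < 1) (ha0 : 0 ≤ a) (ha1 : a ≤ 1) :
    Real.log (1 + a*t) - Real.log (1 - a*t) ≤ a * (Real.log (1+t) - Real.log (1-t)) := by
  have hat : |a*t| < 1 := by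
    rw [abs_of_nonneg (by positivity)]
    nlinarith
  have ht : |t| < 1 := by rwa [abs_of_nonneg ht0]
  have hs1 := Real.hasSum_log_sub_log_of_abs_lt_one hat
  have hs2 := (Real.hasSum_log_sub_log_of_abs_lt_one ht).mul_left a
  refine hasSum_le ?_ hs1 hs2
  intro k
  have h1 : (a*t)^(2*k+1) = a^(2*k+1) * t^(2*k+1) := mul_pow a t _
  have h2 : a^(2*k+1) ≤ a := by
    calc a^(2*k+1) ≤ a^1 := pow_le_pow_of_le_one ha0 ha1 (by omega)
    _ = a := pow_one a
  have h3 : (0:ℝ) ≤ t^(2*k+1) := by positivity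
  have h4 : (0:ℝ) ≤ 2 * (1/(2*(k:ℝ)+1)) := by positivity
  calc (2:ℝ) * (1/(2*k+1)) * (a*t)^(2*k+1) = 2 * (1/(2*(k:ℝ)+1)) * (a^(2*k+1) * t^(2*k+1)) := by
        rw [h1]
    _ ≤ 2 * (1/(2*(k:ℝ)+1)) * (a * t^(2*k+1)) := by
        apply mul_le_mul_of_nonneg_left _ h4
        exact mul_le_mul_of_nonneg_right h2 h3
    _ = a * (2 * (1/(2*(k:ℝ)+1)) * t^(2*k+1)) := by ring

lemma log_ratio_mono {s s' : ℝ} (hs0 : 0 ≤ s) (h : s ≤ s') (h1 : s' < 1) :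
    Real.log (1+s) - Real.log (1-s) ≤ Real.log (1+s') - Real.log (1-s') := by
  have e1 : Real.log (1+s) ≤ Real.log (1+s') :=
    Real.log_le_log (by linarith) (by linarith)
  have e2 : Real.log (1-s') ≤ Real.log (1-s) :=
    Real.log_le_log (by linarith) (by linarith)
  linarith

lemma L1 {α : ℝ} (h0 : 0 < α) (h1 : α < 1) {x : ℝ} (hx : 1 ≤ x) :
    (x + α) / x ≤ ((x + (1+α)/2) / (x - (1-α)/2)) ^ α := by
  set t : ℝ := 1/(2*x+α) with hts
  have hx0 : (0:ℝ) < x := by linarith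
  have htpos : 0 < t := by positivity
  have ht1 : t < 1 := by
    rw [hts, div_lt_one (by linarith)]
    linarith
  have hkey := art_scale (le_of_lt htpos) ht1 (le_of_lt h0) (le_of_lt h1)
  have hden : (0:ℝ) < 2*x+α := by linarith
  have e1 : 1 + α*t = (2*x+2*α)/(2*x+α) := by
    rw [hts]; field_simp; ring
  have e2 : 1 - α*t = (2*x)/(2*x+α) := by
    rw [hts]; field_simp; ring
  have e3 : 1 + t = (2*x+α+1)/(2*x+α) := by
    rw [hts]; field_simp
  have e4 : 1 - t = (2*x+α-1)/(2*x+α) := by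
    rw [hts]; field_simp
  have hA : (x+α)/x = (1+α*t)/(1-α*t) := by
    rw [e1, e2, div_div_div_eq]
    rw [div_eq_div_iff (by positivity : (x:ℝ) ≠ 0) (by positivity : ((2*x+α)*(2*x)) ≠ 0)]
    ring
  have hB : (x + (1+α)/2) / (x - (1-α)/2) = (1+t)/(1-t) := by
    have hd : (0:ℝ) < 2*x+α-1 := by linarith
    rw [e3, e4, div_div_div_eq]
    rw [div_eq_div_iff (by intro hc; nlinarith : (x - (1-α)/2) ≠ 0) (ne_of_gt (mul_pos hden hd))]
    ring
  have hp1 : (0:ℝ) < 1 + α*t := by positivity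
  have hp2 : (0:ℝ) < 1 - α*t := by
    rw [e2]; positivity
  have hp3 : (0:ℝ) < 1 + t := by positivity
  have hp4 : (0:ℝ) < 1 - t := by linarith
  rw [hA, hB]
  have hlog1 : Real.log ((1+α*t)/(1-α*t)) = Real.log (1+α*t) - Real.log (1-α*t) :=
    Real.log_div (ne_of_gt hp1) (ne_of_gt hp2)
  have hlog2 : Real.log ((1+t)/(1-t)) = Real.log (1+t) - Real.log (1-t) :=
    Real.log_div (ne_of_gt hp3) (ne_of_gt hp4)
  have hq : (0:ℝ) < (1+α*t)/(1-α*t) := by positivity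
  have hq2 : (0:ℝ) < (1+t)/(1-t) := by positivity
  calc (1+α*t)/(1-α*t) = Real.exp (Real.log ((1+α*t)/(1-α*t))) := (Real.exp_log hq).symm
    _ ≤ Real.exp (α * Real.log ((1+t)/(1-t))) := by
        apply Real.exp_le_exp.mpr
        rw [hlog1, hlog2]
        exact hkey
    _ = ((1+t)/(1-t)) ^ α := by
        rw [Real.rpow_def_of_pos hq2, mul_comm]

lemma k1_ratio_aux {α : ℝ} (h0 : 0 < α) (h1 : α < 1) (j t : ℕ) :
    cesK (α+1) (j+t) ≤
      ((((j:ℝ)+(t:ℝ)+1) - (1-α)/2) / (((j:ℝ)+1) - (1-α)/2)) ^ α * cesK (α+1) j := by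
  induction t with
  | zero =>
    simp only [Nat.cast_zero, add_zero]
    rw [div_self (by nlinarith : ((j:ℝ)+1) - (1-α)/2 ≠ 0), Real.one_rpow, one_mul]
  | succ t ih =>
    push_cast
    have hstep : cesK (α+1) (j+(t+1)) = cesK (α+1) (j+t) * ((((j:ℝ)+t) + (α+1)) / (((j:ℝ)+t) + 1)) := by
      have := cesK_succ (by positivity : (0:ℝ) < α + 1) (j+t)
      rw [show j + (t+1) = (j+t) + 1 by ring, this]
      push_cast
      ring_nf
    have hx : (1:ℝ) ≤ (j:ℝ) + t + 1 := by
      have : (0:ℝ) ≤ (j:ℝ) + t := by positivity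
      linarith
    have hL1 := L1 h0 h1 hx
    have hrw : ((j:ℝ)+t+1 + α) / ((j:ℝ)+t+1) = (((j:ℝ)+t) + (α+1)) / (((j:ℝ)+t) + 1) := by
      ring_nf
    rw [hrw] at hL1
    have hpos1 : (0:ℝ) < ((j:ℝ)+t+1) - (1-α)/2 := by
      have : (0:ℝ) ≤ (j:ℝ) + t := by positivity
      nlinarith
    have hpos0 : (0:ℝ) < ((j:ℝ)+1) - (1-α)/2 := by
      have : (0:ℝ) ≤ (j:ℝ) := by positivity
      nlinarith
    have hpos2 : (0:ℝ) < ((j:ℝ)+t+1+1) - (1-α)/2 := by nlinarith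
    have hratpos : (0:ℝ) < (((j:ℝ)+t) + (α+1)) / (((j:ℝ)+t) + 1) := by
      have : (0:ℝ) ≤ (j:ℝ) + t := by positivity
      positivity
    have hk1pos := cesK_pos (by positivity : (0:ℝ) < α + 1) j
    calc cesK (α+1) (j+(t+1))
        = cesK (α+1) (j+t) * ((((j:ℝ)+t) + (α+1)) / (((j:ℝ)+t) + 1)) := hstep
      _ ≤ (((((j:ℝ)+t+1) - (1-α)/2) / (((j:ℝ)+1) - (1-α)/2)) ^ α * cesK (α+1) j)
            * ((((j:ℝ)+t+1) + (1+α)/2) / (((j:ℝ)+t+1) - (1-α)/2)) ^ α := by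
          apply mul_le_mul ih hL1 (le_of_lt hratpos)
          positivity
      _ = ((((j:ℝ)+(t:ℝ)+1+1) - (1-α)/2) / (((j:ℝ)+1) - (1-α)/2)) ^ α * cesK (α+1) j := by
          have hAB : ((((j:ℝ)+(t:ℝ)+1) - (1-α)/2) / (((j:ℝ)+1) - (1-α)/2)) ^ α *
              ((((j:ℝ)+(t:ℝ)+1) + (1+α)/2) / (((j:ℝ)+(t:ℝ)+1) - (1-α)/2)) ^ α
              = ((((j:ℝ)+(t:ℝ)+1+1) - (1-α)/2) / (((j:ℝ)+1) - (1-α)/2)) ^ α := by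
            rw [← Real.mul_rpow (by positivity) (by positivity)]
            congr 1
            rw [div_mul_div_comm]
            rw [div_eq_div_iff (ne_of_gt (mul_pos hpos0 hpos1)) (ne_of_gt hpos0)]
            ring
          rw [mul_right_comm, hAB]
      _ = ((((j:ℝ)+((t:ℝ)+1)+1) - (1-α)/2) / (((j:ℝ)+1) - (1-α)/2)) ^ α * cesK (α+1) j := by
          ring_nf
  
lemma k1_ratio {α : ℝ} (h0 : 0 < α) (h1 : α < 1) (j t : ℕ) (ht : t ≤ j + 1) :
    cesK (α+1) (j+t) ≤ ((3+α)/(1+α)) ^ α * cesK (α+1) j := by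
  refine le_trans (k1_ratio_aux h0 h1 j t) ?_
  have hk1pos := cesK_pos (by positivity : (0:ℝ) < α + 1) j
  apply mul_le_mul_of_nonneg_right _ (le_of_lt hk1pos)
  have hpos0 : (0:ℝ) < ((j:ℝ)+1) - (1-α)/2 := by
    have : (0:ℝ) ≤ (j:ℝ) := by positivity
    nlinarith
  apply Real.rpow_le_rpow (div_nonneg (by nlinarith) (le_of_lt hpos0)) _ (le_of_lt h0)
  rw [div_le_div_iff₀ hpos0 (by positivity : (0:ℝ) < 1+α)]
  have htr : (t:ℝ) ≤ (j:ℝ) + 1 := by exact_mod_cast ht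
  have hj : (0:ℝ) ≤ (j:ℝ) := by positivity
  nlinarith

lemma lam_lower {α : ℝ} (h0 : 0 < α) (h1 : α < 1) :
    (1:ℝ) + α/(1+α) ≤ ((3+α)/(1+α)) ^ α := by
  set s : ℝ := 1/(2+α) with hs
  have hs0 : 0 < s := by positivity
  have hs1 : s < 1 := by rw [hs, div_lt_one (by linarith)]; linarith
  have hkey := art_scale (le_of_lt hs0) hs1 (le_of_lt h0) (le_of_lt h1)
  set s' : ℝ := α/(2+3*α) with hs'
  have hs'0 : 0 ≤ s' := by positivity
  have hs'le : s' ≤ α * s := by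
    rw [hs', hs]
    rw [div_le_iff₀ (by linarith : (0:ℝ) < 2+3*α)]
    rw [mul_comm α, mul_assoc]
    rw [div_mul_eq_mul_div, le_div_iff₀ (by linarith : (0:ℝ) < 2+α)]
    nlinarith
  have has1 : α * s < 1 := by
    calc α * s < 1 * s := by exact mul_lt_mul_of_pos_right h1 hs0
    _ = s := one_mul s
    _ < 1 := hs1
  have hmono := log_ratio_mono hs'0 hs'le has1
  have hchain : Real.log (1+s') - Real.log (1-s') ≤ α * (Real.log (1+s) - Real.log (1-s)) := by
    have : Real.log (1 + α*s) - Real.log (1 - α*s) ≤ α * (Real.log (1+s) - Real.log (1-s)) := hkey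
    calc Real.log (1+s') - Real.log (1-s') ≤ Real.log (1+α*s) - Real.log (1-α*s) := hmono
      _ ≤ α * (Real.log (1+s) - Real.log (1-s)) := hkey
  have h1s' : (0:ℝ) < 1 + s' := by positivity
  have h2s' : (0:ℝ) < 1 - s' := by
    rw [hs']
    rw [sub_pos, div_lt_one (by linarith : (0:ℝ) < 2+3*α)]
    linarith
  have h1s : (0:ℝ) < 1 + s := by positivity
  have h2s : (0:ℝ) < 1 - s := by linarith
  have eA : (1+s')/(1-s') = (1+2*α)/(1+α) := by
    rw [hs']
    rw [div_eq_div_iff (by intro hc; nlinarith : ((1:ℝ) - α/(2+3*α)) ≠ 0) (by positivity : ((1:ℝ)+α) ≠ 0)]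
    field_simp
    ring
  have eB : (1+s)/(1-s) = (3+α)/(1+α) := by
    rw [hs]
    rw [div_eq_div_iff (by intro hc; nlinarith : ((1:ℝ) - 1/(2+α)) ≠ 0) (by positivity : ((1:ℝ)+α) ≠ 0)]
    field_simp
    ring
  have hgoal : (1+2*α)/(1+α) ≤ ((3+α)/(1+α)) ^ α := by
    have hq : (0:ℝ) < (1+s')/(1-s') := by positivity
    have hq2 : (0:ℝ) < (1+s)/(1-s) := by positivity
    rw [← eA, ← eB]
    calc (1+s')/(1-s') = Real.exp (Real.log ((1+s')/(1-s'))) := (Real.exp_log hq).symm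
      _ ≤ Real.exp (α * Real.log ((1+s)/(1-s))) := by
          apply Real.exp_le_exp.mpr
          rw [Real.log_div (ne_of_gt h1s') (ne_of_gt h2s'), Real.log_div (ne_of_gt h1s) (ne_of_gt h2s)]
          exact hchain
      _ = ((1+s)/(1-s)) ^ α := by rw [Real.rpow_def_of_pos hq2, mul_comm]
  refine le_trans (le_of_eq ?_) hgoal
  field_simp
  ring

noncomputable def wker (α : ℝ) (n i j : ℕ) : ℝ :=
  if n ≤ i + j then
    (if i+j-n ≤ i then cesK α (i+j-n) else 0) + (if i+j-n ≤ j then cesK α (i+j-n) else 0)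
      - cesK α (i+j-n)
  else 0

lemma wker_symm (α : ℝ) (n i j : ℕ) : wker α n i j = wker α n j i := by
  unfold wker
  rw [Nat.add_comm i j]
  by_cases h : n ≤ j + i
  · simp only [if_pos h]
    ring
  · simp only [if_neg h]

lemma wbound_of_le {α : ℝ} (h0 : 0 < α) (h1 : α < 1) {i j : ℕ} (hij : i ≤ j) :
    ∑ n ∈ Finset.range (i+j+1), cesK (α+1) n * |wker α n i j|
      ≤ (2*((3+α)/(1+α))^α - 1) * (cesK (α+1) i * cesK (α+1) j) := by
  set Λ : ℝ := ((3+α)/(1+α))^α with hΛ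
  have hk1pos : ∀ m, 0 < cesK (α+1) m := cesK_pos (by positivity)
  have hk0pos : ∀ m, 0 < cesK α m := cesK_pos h0
  -- reflect the sum
  have hrefl : ∑ n ∈ Finset.range (i+j+1), cesK (α+1) n * |wker α n i j|
      = ∑ s ∈ Finset.range (i+j+1), cesK (α+1) ((i+j) - s) * |wker α ((i+j) - s) i j| := by
    rw [← Finset.sum_range_reflect (fun n => cesK (α+1) n * |wker α n i j|) (i+j+1)]
    apply Finset.sum_congr rfl
    intro s hs
    congr 2 <;> omega
  rw [hrefl]
  -- identify the terms
  have hterm : ∀ s ∈ Finset.range (i+j+1),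
      cesK (α+1) ((i+j) - s) * |wker α ((i+j) - s) i j|
      = (if s ≤ i ∨ j < s then cesK (α+1) ((i+j) - s) * cesK α s else 0) := by
    intro s hs
    have hs' : s ≤ i + j := by
      simp only [Finset.mem_range] at hs; omega
    have hn : (i+j) - s ≤ i + j := by omega
    have hsub : i + j - ((i+j) - s) = s := by omega
    unfold wker
    rw [if_pos hn, hsub]
    by_cases hsi : s ≤ i
    · have hsj : s ≤ j := le_trans hsi hij
      rw [if_pos hsi, if_pos hsj, if_pos (Or.inl hsi)]
      have : cesK α s + cesK α s - cesK α s = cesK α s := by ring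
      rw [this, abs_of_pos (hk0pos s)]
    · by_cases hsj : s ≤ j
      · rw [if_neg hsi, if_pos hsj, if_neg (by omega : ¬(s ≤ i ∨ j < s))]
        simp
      · rw [if_neg hsi, if_neg hsj, if_pos (Or.inr (by omega))]
        have : (0:ℝ) + 0 - cesK α s = -(cesK α s) := by ring
        rw [this, abs_neg, abs_of_pos (hk0pos s)]
  rw [Finset.sum_congr rfl hterm]
  -- split range
  have hsplit : Finset.range (i+j+1) = Finset.Ico 0 (i+1) ∪ Finset.Ico (i+1) (i+j+1) := by
    rw [Finset.range_eq_Ico, ← Finset.Ico_union_Ico_eq_Ico (show 0 ≤ i+1 by omega) (show i+1 ≤ i+j+1 by omega)]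
  have hdisj : Disjoint (Finset.Ico 0 (i+1)) (Finset.Ico (i+1) (i+j+1)) := by
    apply Finset.Ico_disjoint_Ico_consecutive
  rw [hsplit, Finset.sum_union hdisj]
  have hP : ∑ s ∈ Finset.Ico 0 (i+1), (if s ≤ i ∨ j < s then cesK (α+1) ((i+j) - s) * cesK α s else 0)
      ≤ Λ * (cesK (α+1) i * cesK (α+1) j) := by
    have : ∀ s ∈ Finset.Ico 0 (i+1),
        (if s ≤ i ∨ j < s then cesK (α+1) ((i+j) - s) * cesK α s else 0)
        ≤ (Λ * cesK (α+1) j) * cesK α s := by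
      intro s hs
      simp only [Finset.mem_Ico] at hs
      have hsi : s ≤ i := by omega
      rw [if_pos (Or.inl hsi)]
      apply mul_le_mul_of_nonneg_right _ (le_of_lt (hk0pos s))
      have heq : (i+j) - s = j + (i - s) := by omega
      rw [heq]
      exact k1_ratio h0 h1 j (i - s) (by omega)
    refine le_trans (Finset.sum_le_sum this) ?_
    rw [← Finset.mul_sum]
    rw [show Finset.Ico 0 (i+1) = Finset.range (i+1) by rw [Finset.range_eq_Ico]]
    rw [k1_sum_k0 h0 i]
    ring_nf
    exact le_refl _
  have hR : ∑ s ∈ Finset.Ico (i+1) (i+j+1), (if s ≤ i ∨ j < s then cesK (α+1) ((i+j) - s) * cesK α s else 0)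
      ≤ (α/(1+α)) * (cesK (α+1) i * cesK (α+1) j) := by
    have hsub2 : Finset.Ico (i+1) (i+j+1) = Finset.Ico (i+1) (j+1) ∪ Finset.Ico (j+1) (i+j+1) := by
      rw [← Finset.Ico_union_Ico_eq_Ico (show i+1 ≤ j+1 by omega) (show j+1 ≤ i+j+1 by omega)]
    rw [hsub2, Finset.sum_union (Finset.Ico_disjoint_Ico_consecutive _ _ _)]
    have hz : ∑ s ∈ Finset.Ico (i+1) (j+1), (if s ≤ i ∨ j < s then cesK (α+1) ((i+j) - s) * cesK α s else 0) = 0 := by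
      apply Finset.sum_eq_zero
      intro s hs
      simp only [Finset.mem_Ico] at hs
      rw [if_neg (by omega)]
    rw [hz, zero_add]
    have hstep : ∀ s ∈ Finset.Ico (j+1) (i+j+1),
        (if s ≤ i ∨ j < s then cesK (α+1) ((i+j) - s) * cesK α s else 0)
        ≤ cesK (α+1) ((i+j) - s) * cesK α (j+1) := by
      intro s hs
      simp only [Finset.mem_Ico] at hs
      rw [if_pos (Or.inr (by omega))]
      exact mul_le_mul_of_nonneg_left (k0_anti h0 h1 (by omega)) (le_of_lt (hk1pos _))
    refine le_trans (Finset.sum_le_sum hstep) ?_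
    have hre : ∑ s ∈ Finset.Ico (j+1) (i+j+1), cesK (α+1) ((i+j) - s) * cesK α (j+1)
        = (∑ m ∈ Finset.range i, cesK (α+1) m) * cesK α (j+1) := by
      rw [← Finset.sum_mul]
      congr 1
      rw [Finset.sum_Ico_eq_sum_range]
      have : i + j + 1 - (j+1) = i := by omega
      rw [this]
      rw [← Finset.sum_range_reflect (fun m => cesK (α+1) m) i]
      apply Finset.sum_congr rfl
      intro u hu
      simp only [Finset.mem_range] at hu
      congr 1
      omega
    rw [hre, k1_partial_sum h0 i, k0_succ_eq h0 j]
    have hi1 : (i:ℝ) ≤ (j:ℝ) + 1 := by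
      have : (i:ℝ) ≤ (j:ℝ) := by exact_mod_cast hij
      linarith
    have h2 : (0:ℝ) < 1 + α := by linarith
    have h3 : (0:ℝ) < (j:ℝ) + 1 := by positivity
    calc (i:ℝ) / (1 + α) * cesK (α+1) i * (cesK (α+1) j * (α / ((j:ℝ)+1)))
        = (α/(1+α)) * (cesK (α+1) i * cesK (α+1) j) * ((i:ℝ)/((j:ℝ)+1)) := by
          field_simp
      _ ≤ (α/(1+α)) * (cesK (α+1) i * cesK (α+1) j) * 1 := by
          apply mul_le_mul_of_nonneg_left
          · rw [div_le_one h3]; linarith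
          · have := hk1pos i; have := hk1pos j; positivity
      _ = (α/(1+α)) * (cesK (α+1) i * cesK (α+1) j) := by ring
  have hfin : Λ + α/(1+α) ≤ 2*Λ - 1 := by
    have := lam_lower h0 h1
    rw [← hΛ] at this
    linarith
  have hprod : (0:ℝ) < cesK (α+1) i * cesK (α+1) j := mul_pos (hk1pos i) (hk1pos j)
  calc _ ≤ Λ * (cesK (α+1) i * cesK (α+1) j) + (α/(1+α)) * (cesK (α+1) i * cesK (α+1) j) :=
        add_le_add hP hR
    _ = (Λ + α/(1+α)) * (cesK (α+1) i * cesK (α+1) j) := by ring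
    _ ≤ (2*Λ - 1) * (cesK (α+1) i * cesK (α+1) j) :=
        mul_le_mul_of_nonneg_right hfin (le_of_lt hprod)

lemma wbound {α : ℝ} (h0 : 0 < α) (h1 : α < 1) (i j : ℕ) (K : ℕ) :
    ∑ n ∈ Finset.range K, cesK (α+1) n * |wker α n i j|
      ≤ (2*((3+α)/(1+α))^α - 1) * (cesK (α+1) i * cesK (α+1) j) := by
  have hnonneg : ∀ n, 0 ≤ cesK (α+1) n * |wker α n i j| := by
    intro n
    exact mul_nonneg (le_of_lt (cesK_pos (by positivity) n)) (abs_nonneg _)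
  have hzero : ∀ n, i + j < n → cesK (α+1) n * |wker α n i j| = 0 := by
    intro n hn
    unfold wker
    rw [if_neg (by omega)]
    simp
  have hle : ∑ n ∈ Finset.range K, cesK (α+1) n * |wker α n i j|
      ≤ ∑ n ∈ Finset.range (i+j+1), cesK (α+1) n * |wker α n i j| := by
    by_cases hK : K ≤ i + j + 1
    · apply Finset.sum_le_sum_of_subset_of_nonneg
      · exact Finset.range_subset_range.mpr hK
      · intro n _ _; exact hnonneg n
    · apply le_of_eq
      refine (Finset.sum_subset (Finset.range_subset_range.mpr (by omega)) ?_).symm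
      intro n hn hn2
      simp only [Finset.mem_range] at hn hn2
      exact hzero n (by omega)
  refine le_trans hle ?_
  rcases le_total i j with hij | hij
  · exact wbound_of_le h0 h1 hij
  · have hsym : ∀ n, wker α n i j = wker α n j i := fun n => wker_symm α n i j
    calc ∑ n ∈ Finset.range (i+j+1), cesK (α+1) n * |wker α n i j|
        = ∑ n ∈ Finset.range (j+i+1), cesK (α+1) n * |wker α n j i| := by
          rw [Nat.add_comm i j]
          exact Finset.sum_congr rfl (fun n _ => by rw [hsym n])
      _ ≤ (2*((3+α)/(1+α))^α - 1) * (cesK (α+1) j * cesK (α+1) i) := wbound_of_le h0 h1 hij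
      _ = (2*((3+α)/(1+α))^α - 1) * (cesK (α+1) i * cesK (α+1) j) := by ring

open Finset in
lemma tri_comm {M : Type*} [AddCommMonoid M] (s : ℕ) (g : ℕ → ℕ → M) :
    ∑ r ∈ range (s+1), ∑ x ∈ range (s+1-r), g r x
      = ∑ x ∈ range (s+1), ∑ r ∈ range (s+1-x), g r x := by
  have h1 := Finset.sum_range_diag_flip (s+1) g
  have h2 := Finset.sum_range_diag_flip (s+1) (fun a b => g b a)
  rw [← h1, ← h2]
  apply Finset.sum_congr rfl
  intro m _
  calc ∑ k ∈ range (m+1), g k (m-k)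
      = ∑ k ∈ range (m+1), (fun j => g (m-j) j) (m+1-1-k) := by
        apply Finset.sum_congr rfl
        intro k hk
        simp only [Finset.mem_range] at hk
        simp only []
        congr 1 <;> omega
    _ = ∑ k ∈ range (m+1), g (m-k) k := Finset.sum_range_reflect (fun j => g (m-j) j) (m+1)

noncomputable def ccoef (α : ℝ) (r : ℕ) : ℝ :=
  if r = 0 then 1 else cesK (1-α) r - cesK (1-α) (r-1)

lemma ccoef_inv_k0 {α : ℝ} (h0 : 0 < α) (h1 : α < 1) (t : ℕ) :
    ∑ r ∈ Finset.range (t+1), ccoef α r * cesK α (t-r) = if t = 0 then 1 else 0 := by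
  have hb : (0:ℝ) < 1 - α := by linarith
  rcases t with _ | t
  · simp [ccoef, cesK_zero h0]
  · rw [if_neg (Nat.succ_ne_zero t)]
    rw [Finset.sum_range_succ']
    have hc0 : ccoef α 0 * cesK α (t+1-0) = cesK α (t+1) := by
      simp [ccoef]
    rw [hc0]
    have hterm : ∀ r, ccoef α (r+1) * cesK α (t+1-(r+1))
        = cesK (1-α) (r+1) * cesK α (t-r) - cesK (1-α) r * cesK α (t-r) := by
      intro r
      have : ccoef α (r+1) = cesK (1-α) (r+1) - cesK (1-α) r := by
        simp [ccoef]
      rw [this, show t+1-(r+1) = t-r by omega]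
      ring
    rw [Finset.sum_congr rfl (fun r _ => hterm r), Finset.sum_sub_distrib]
    have hB : ∑ r ∈ Finset.range (t+1), cesK (1-α) r * cesK α (t-r) = 1 := by
      have := cesK_vandermonde_range hb h0 t
      rw [show (1-α)+α = 1 by ring] at this
      rw [this, cesK_one]
    have hA : ∑ r ∈ Finset.range (t+1), cesK (1-α) (r+1) * cesK α (t-r)
        = 1 - cesK α (t+1) := by
      have hv := cesK_vandermonde_range hb h0 (t+1)
      rw [show (1-α)+α = 1 by ring, cesK_one] at hv
      rw [Finset.sum_range_succ'] at hv
      have h00 : cesK (1-α) 0 * cesK α (t+1-0) = cesK α (t+1) := by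
        simp [cesK_zero hb]
      rw [h00] at hv
      have : ∑ r ∈ Finset.range (t+1), cesK (1-α) (r+1) * cesK α (t+1-(r+1))
          = ∑ r ∈ Finset.range (t+1), cesK (1-α) (r+1) * cesK α (t-r) := by
        apply Finset.sum_congr rfl
        intro r _
        have he : t+1-(r+1) = t-r := by omega
        rw [he]
      rw [this] at hv
      linarith
    rw [hA, hB]
    ring

lemma ccoef_inv_k2 {α : ℝ} (h0 : 0 < α) (h1 : α < 1) (t : ℕ) :
    ∑ r ∈ Finset.range (t+1), ccoef α r * cesK (2*α) (t-r) = cesK α t := by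
  have hb : (0:ℝ) < 1 - α := by linarith
  have h2a : (0:ℝ) < 2*α := by linarith
  rcases t with _ | t
  · simp [ccoef, cesK_zero h2a, cesK_zero h0]
  · rw [Finset.sum_range_succ']
    have hc0 : ccoef α 0 * cesK (2*α) (t+1-0) = cesK (2*α) (t+1) := by
      simp [ccoef]
    rw [hc0]
    have hterm : ∀ r, ccoef α (r+1) * cesK (2*α) (t+1-(r+1))
        = cesK (1-α) (r+1) * cesK (2*α) (t-r) - cesK (1-α) r * cesK (2*α) (t-r) := by
      intro r
      have : ccoef α (r+1) = cesK (1-α) (r+1) - cesK (1-α) r := by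
        simp [ccoef]
      rw [this, show t+1-(r+1) = t-r by omega]
      ring
    rw [Finset.sum_congr rfl (fun r _ => hterm r), Finset.sum_sub_distrib]
    have hsum1a : (1-α) + 2*α = 1 + α := by ring
    have hB : ∑ r ∈ Finset.range (t+1), cesK (1-α) r * cesK (2*α) (t-r) = cesK (1+α) t := by
      have := cesK_vandermonde_range hb h2a t
      rwa [hsum1a] at this
    have hA : ∑ r ∈ Finset.range (t+1), cesK (1-α) (r+1) * cesK (2*α) (t-r)
        = cesK (1+α) (t+1) - cesK (2*α) (t+1) := by
      have hv := cesK_vandermonde_range hb h2a (t+1)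
      rw [hsum1a] at hv
      rw [Finset.sum_range_succ'] at hv
      have h00 : cesK (1-α) 0 * cesK (2*α) (t+1-0) = cesK (2*α) (t+1) := by
        simp [cesK_zero hb]
      rw [h00] at hv
      have : ∑ r ∈ Finset.range (t+1), cesK (1-α) (r+1) * cesK (2*α) (t+1-(r+1))
          = ∑ r ∈ Finset.range (t+1), cesK (1-α) (r+1) * cesK (2*α) (t-r) := by
        apply Finset.sum_congr rfl
        intro r _
        have he : t+1-(r+1) = t-r := by omega
        rw [he]
      rw [this] at hv
      linarith
    rw [hA, hB]
    have hdiff : cesK α (t+1) = cesK (α+1) (t+1) - cesK (α+1) t := by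
      have ha := k1_sum_k0 h0 t
      have hb2 := k1_sum_k0 h0 (t+1)
      rw [Finset.sum_range_succ, ha] at hb2
      linarith
    rw [show (1:ℝ)+α = α+1 by ring, hdiff]
    ring

noncomputable def eK (α : ℝ) (i : ℕ) : ℕ → ℂ :=
  fun n => if n ≤ i then ((cesK α (i-n) : ℝ) : ℂ) else 0

lemma weylDiff_rep {α : ℝ} (h0 : 0 < α) (h1 : α < 1) {f : ℕ → ℂ} {N : ℕ}
    (hfN : ∀ m, N < m → f m = 0) (n : ℕ) :
    weylDiff α f n = ∑ r ∈ Finset.range (N+1), ((ccoef α r : ℝ) : ℂ) * f (r+n) := by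
  have hfl : ⌊α⌋₊ = 0 := Nat.floor_eq_zero.mpr h1
  have hα : α ≠ 0 := ne_of_gt h0
  rw [weylDiff, if_neg hα]
  simp only [hfl, Nat.cast_zero, pow_one, Function.iterate_one]
  have hws : ∀ k, weylSum ((0:ℝ) + 1 - α) f k
      = ∑ j ∈ Finset.range (N+1), ((cesK (1-α) j : ℝ) : ℂ) * f (j+k) := by
    intro k
    rw [weylSum]
    have : (0:ℝ) + 1 - α = 1 - α := by ring
    rw [this]
    apply finsum_eq_sum_of_support_subset
    intro j hj
    simp only [Function.mem_support, ne_eq] at hj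
    simp only [Finset.coe_range, Set.mem_Iio]
    by_contra hcon
    push_neg at hcon
    have : f (j + k) = 0 := hfN _ (by omega)
    rw [this, mul_zero] at hj
    exact hj rfl
  simp only [show (0+1 : ℕ) = 1 from rfl, pow_one, Function.iterate_one, fdiff]
  rw [hws n, hws (n+1)]
  -- LHS: -1 * (S(n+1) - S n) = S n - S (n+1)
  have hSn : ∑ j ∈ Finset.range (N+1), ((cesK (1-α) j : ℝ) : ℂ) * f (j+n)
      = ((cesK (1-α) 0 : ℝ) : ℂ) * f n
        + ∑ r ∈ Finset.range N, ((cesK (1-α) (r+1) : ℝ) : ℂ) * f (r+1+n) := by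
    rw [Finset.sum_range_succ']
    simp only [Nat.zero_add, zero_add]
    rw [add_comm]
  have hSn1 : ∑ j ∈ Finset.range (N+1), ((cesK (1-α) j : ℝ) : ℂ) * f (j+(n+1))
      = ∑ r ∈ Finset.range N, ((cesK (1-α) r : ℝ) : ℂ) * f (r+1+n) := by
    rw [Finset.sum_range_succ]
    have : f (N + (n+1)) = 0 := hfN _ (by omega)
    rw [this, mul_zero, add_zero]
    apply Finset.sum_congr rfl
    intro r _
    have he : r + (n+1) = r+1+n := by omega
    rw [he]
  have hRHS : ∑ r ∈ Finset.range (N+1), ((ccoef α r : ℝ) : ℂ) * f (r+n)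
      = ((1:ℝ) : ℂ) * f n
        + ∑ r ∈ Finset.range N, (((cesK (1-α) (r+1) - cesK (1-α) r : ℝ)) : ℂ) * f (r+1+n) := by
    rw [Finset.sum_range_succ']
    have h00 : ccoef α 0 = 1 := by simp [ccoef]
    rw [h00]
    simp only [Nat.zero_add, zero_add]
    have : ∀ r, ccoef α (r+1) = cesK (1-α) (r+1) - cesK (1-α) r := by
      intro r; simp [ccoef]
    rw [Finset.sum_congr rfl (fun r _ => by rw [this r])]
    rw [add_comm]
  rw [hSn, hSn1, hRHS]
  have h00 : cesK (1-α) 0 = 1 := cesK_zero (by linarith)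
  rw [h00]
  push_cast
  rw [Finset.sum_congr rfl
    (fun r _ => sub_mul ((cesK (1-α) (r+1) : ℂ)) ((cesK (1-α) r : ℂ)) (f (r+1+n)))]
  rw [Finset.sum_sub_distrib]
  ring

lemma eK_inner {α : ℝ} (h0 : 0 < α) (h1 : α < 1) (m n : ℕ) :
    ∑ q ∈ Finset.range (m+1), ((ccoef α q : ℝ) : ℂ) * eK α (m-q) n
      = if m = n then 1 else 0 := by
  by_cases hmn : n ≤ m
  · have hsub : Finset.range (m-n+1) ⊆ Finset.range (m+1) := by
      apply Finset.range_subset_range.mpr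
      omega
    have hz : ∀ q ∈ Finset.range (m+1), q ∉ Finset.range (m-n+1) →
        ((ccoef α q : ℝ) : ℂ) * eK α (m-q) n = 0 := by
      intro q hq hq2
      simp only [Finset.mem_range] at hq hq2
      have : ¬ (n ≤ m - q) := by omega
      rw [eK, if_neg this, mul_zero]
    rw [← Finset.sum_subset hsub hz]
    have hterm : ∀ q ∈ Finset.range (m-n+1),
        ((ccoef α q : ℝ) : ℂ) * eK α (m-q) n = ((ccoef α q * cesK α ((m-n)-q) : ℝ) : ℂ) := by
      intro q hq
      simp only [Finset.mem_range] at hq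
      rw [eK, if_pos (by omega : n ≤ m - q)]
      have : m - q - n = (m-n) - q := by omega
      rw [this]
      push_cast
      ring
    rw [Finset.sum_congr rfl hterm]
    rw [← Complex.ofReal_sum]
    rw [ccoef_inv_k0 h0 h1 (m-n)]
    by_cases he : m = n
    · rw [if_pos he, if_pos (by omega : m - n = 0)]
      norm_num
    · rw [if_neg he, if_neg (by omega : ¬ (m - n = 0))]
      norm_num
  · rw [if_neg (by omega : ¬ m = n)]
    apply Finset.sum_eq_zero
    intro q hq
    simp only [Finset.mem_range] at hq
    rw [eK, if_neg (by omega : ¬ (n ≤ m - q)), mul_zero]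

open Finset in
lemma swap_sum {A B v : ℕ → ℂ} {K : ℕ} (hv : ∀ m, K ≤ m → v m = 0) :
    ∑ i ∈ range K, ∑ r ∈ range K, A i * B r * v (r+i)
      = ∑ m ∈ range K, (∑ q ∈ range (m+1), A (m-q) * B q) * v m := by
  rw [Finset.sum_comm]
  have h1 : ∀ r ∈ range K, ∑ i ∈ range K, A i * B r * v (r+i)
      = ∑ i ∈ range (K - r), B r * A i * v (r+i) := by
    intro r hr
    simp only [Finset.mem_range] at hr
    rw [← Finset.sum_subset (Finset.range_subset_range.mpr (by omega : K - r ≤ K))]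
    · apply Finset.sum_congr rfl
      intro i _
      ring
    · intro i hi hi2
      simp only [Finset.mem_range] at hi hi2
      rw [hv (r+i) (by omega), mul_zero]
  rw [Finset.sum_congr rfl h1]
  -- now apply diag flip: ∑ r ∈ range K, ∑ i ∈ range (K-r), f r i with f r i = B r * A i * v (r+i)
  rcases Nat.eq_zero_or_pos K with hK | hK
  · subst hK; simp
  · obtain ⟨s, rfl⟩ : ∃ s, K = s + 1 := ⟨K - 1, by omega⟩
    have h2 := Finset.sum_range_diag_flip (s+1) (fun k l => B k * A l * v (k+l))
    rw [← h2]
    apply Finset.sum_congr rfl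
    intro m hm
    simp only [Finset.mem_range] at hm
    rw [Finset.sum_mul]
    apply Finset.sum_congr rfl
    intro q hq
    simp only [Finset.mem_range] at hq
    have he : q + (m - q) = m := by omega
    rw [he]
    ring

lemma eK_decomp {α : ℝ} (h0 : 0 < α) (h1 : α < 1) {f : ℕ → ℂ} {N : ℕ}
    (hfN : ∀ m, N < m → f m = 0) (n : ℕ) :
    f n = ∑ i ∈ Finset.range (N+1), weylDiff α f i * eK α i n := by
  have hW : ∀ i, weylDiff α f i = ∑ r ∈ Finset.range (N+1), ((ccoef α r : ℝ) : ℂ) * f (r+i) :=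
    weylDiff_rep h0 h1 hfN
  have step1 : ∑ i ∈ Finset.range (N+1), weylDiff α f i * eK α i n
      = ∑ i ∈ Finset.range (N+1), ∑ r ∈ Finset.range (N+1),
          eK α i n * ((ccoef α r : ℝ) : ℂ) * f (r+i) := by
    apply Finset.sum_congr rfl
    intro i _
    rw [hW i, Finset.sum_mul]
    apply Finset.sum_congr rfl
    intro r _
    ring
  rw [step1]
  rw [swap_sum (A := fun i => eK α i n) (B := fun r => ((ccoef α r : ℝ) : ℂ))
    (hv := fun m hm => hfN m (by omega))]
  have hinner : ∀ m ∈ Finset.range (N+1),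
      (∑ q ∈ Finset.range (m+1), eK α (m-q) n * ((ccoef α q : ℝ) : ℂ)) * f m
      = (if m = n then 1 else 0) * f m := by
    intro m _
    congr 1
    rw [← eK_inner h0 h1 m n]
    apply Finset.sum_congr rfl
    intro q _
    ring
  rw [Finset.sum_congr rfl hinner]
  by_cases hn : n ≤ N
  · simp only [ite_mul, one_mul, zero_mul]
    rw [Finset.sum_ite_eq' (Finset.range (N+1)) n f]
    simp [Finset.mem_range, Nat.lt_succ_iff, hn]
  · have : ∀ m ∈ Finset.range (N+1), (if m = n then (1:ℂ) else 0) * f m = 0 := by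
      intro m hm
      simp only [Finset.mem_range] at hm
      rw [if_neg (by omega), zero_mul]
    rw [Finset.sum_congr rfl this, Finset.sum_const, smul_zero]
    exact hfN n (by omega)

lemma conv_supp {f g : ℕ → ℂ} {N M : ℕ} (hfN : ∀ m, N < m → f m = 0)
    (hgM : ∀ m, M < m → g m = 0) : ∀ m, N + M < m → conv f g m = 0 := by
  intro m hm
  rw [conv]
  apply Finset.sum_eq_zero
  intro q hq
  simp only [Finset.mem_range] at hq
  by_cases hqM : q ≤ M
  · rw [hfN (m-q) (by omega), zero_mul]
  · rw [hgM q (by omega), mul_zero]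

lemma conv_eK_zero (α : ℝ) (i j m : ℕ) (hm : i + j < m) : conv (eK α i) (eK α j) m = 0 := by
  rw [conv]
  apply Finset.sum_eq_zero
  intro q hq
  simp only [Finset.mem_range] at hq
  simp only [eK]
  by_cases hqj : q ≤ j
  · rw [if_neg (by omega : ¬ (m - q ≤ i)), zero_mul]
  · rw [if_neg (by omega : ¬ (q ≤ j)), mul_zero]

lemma conv_eK {α : ℝ} (i j m : ℕ) (hm : m ≤ i + j) :
    conv (eK α i) (eK α j) m
      = ((∑ x ∈ Finset.range ((i+j-m)+1),
          (if x ≤ i ∧ (i+j-m)-x ≤ j then cesK α x * cesK α ((i+j-m)-x) else 0) : ℝ) : ℂ) := by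
  set s := i + j - m with hs
  rw [conv]
  push_cast [Complex.ofReal_sum]
  have hLf : ∑ q ∈ Finset.range (m+1), eK α i (m-q) * eK α j q
      = ∑ q ∈ (Finset.range (m+1)).filter (fun q => m - q ≤ i ∧ q ≤ j),
          eK α i (m-q) * eK α j q := by
    symm
    apply Finset.sum_filter_of_ne
    intro q hq hne
    by_contra hcon
    push_neg at hcon
    simp only [eK] at hne
    by_cases hc1 : m - q ≤ i
    · exact hne (by rw [if_neg (by omega : ¬ (q ≤ j)), mul_zero])
    · exact hne (by rw [if_neg hc1, zero_mul])
  have hRf : ∑ x ∈ Finset.range (s+1),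
        (if x ≤ i ∧ s-x ≤ j then ((cesK α x * cesK α (s-x) : ℝ) : ℂ) else 0)
      = ∑ x ∈ (Finset.range (s+1)).filter (fun x => x ≤ i ∧ s - x ≤ j),
          ((cesK α x * cesK α (s-x) : ℝ) : ℂ) := by
    rw [Finset.sum_filter]
  have hgoal : ∑ q ∈ (Finset.range (m+1)).filter (fun q => m - q ≤ i ∧ q ≤ j),
        eK α i (m-q) * eK α j q
      = ∑ x ∈ (Finset.range (s+1)).filter (fun x => x ≤ i ∧ s - x ≤ j),
          ((cesK α x * cesK α (s-x) : ℝ) : ℂ) := by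
    apply Finset.sum_nbij' (fun q => i - (m - q)) (fun x => (m + x) - i)
    · intro q hq
      simp only [Finset.mem_filter, Finset.mem_range] at hq ⊢
      omega
    · intro x hx
      simp only [Finset.mem_filter, Finset.mem_range] at hx ⊢
      omega
    · intro q hq
      simp only [Finset.mem_filter, Finset.mem_range] at hq
      omega
    · intro x hx
      simp only [Finset.mem_filter, Finset.mem_range] at hx
      omega
    · intro q hq
      simp only [Finset.mem_filter, Finset.mem_range] at hq
      simp only [eK]
      rw [if_pos (by omega : m - q ≤ i), if_pos (by omega : q ≤ j)]
      push_cast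
      have e1 : i - (m - q) = i - (m - q) := rfl
      have e2 : j - q = s - (i - (m - q)) := by omega
      rw [e2]
  calc ∑ q ∈ Finset.range (m+1), eK α i (m-q) * eK α j q
      = ∑ x ∈ (Finset.range (s+1)).filter (fun x => x ≤ i ∧ s - x ≤ j),
          ((cesK α x * cesK α (s-x) : ℝ) : ℂ) := by rw [hLf, hgoal]
    _ = ∑ x ∈ Finset.range (s+1),
          (if x ≤ i ∧ s-x ≤ j then ((cesK α x * cesK α (s-x) : ℝ) : ℂ) else 0) := hRf.symm
    _ = ∑ x ∈ Finset.range (s+1),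
          (((if x ≤ i ∧ s-x ≤ j then cesK α x * cesK α (s-x) else 0) : ℝ) : ℂ) := by
        apply Finset.sum_congr rfl
        intro x _
        by_cases h : x ≤ i ∧ s - x ≤ j
        · rw [if_pos h, if_pos h]
        · rw [if_neg h, if_neg h]; norm_num

lemma sigma_split {α : ℝ} (h0 : 0 < α) (i j u : ℕ) (hu : u ≤ i + j) :
    ∑ x ∈ Finset.range (u+1), (if x ≤ i ∧ u-x ≤ j then cesK α x * cesK α (u-x) else 0)
      = cesK (2*α) u
        - (∑ x ∈ Finset.range (u+1), (if i < x then cesK α (u-x) * cesK α x else 0))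
        - (∑ x ∈ Finset.range (u+1), (if j < x then cesK α (u-x) * cesK α x else 0)) := by
  have hK2 : cesK (2*α) u = ∑ x ∈ Finset.range (u+1), cesK α x * cesK α (u-x) := by
    rw [show (2*α) = α + α from by ring]
    exact (cesK_vandermonde_range h0 h0 u).symm
  -- reflect tailA back to indicator on x with factors k0 x * k0 (u-x)
  have hreflB : ∑ x ∈ Finset.range (u+1), (if j < x then cesK α (u-x) * cesK α x else 0)
      = ∑ x ∈ Finset.range (u+1), (if j < u-x then cesK α x * cesK α (u-x) else 0) := by
    rw [← Finset.sum_range_reflect (fun x => if j < x then cesK α (u-x) * cesK α x else 0) (u+1)]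
    apply Finset.sum_congr rfl
    intro x hx
    simp only [Finset.mem_range] at hx
    have he : u + 1 - 1 - x = u - x := by omega
    rw [he]
    by_cases h : j < u - x
    · rw [if_pos h, if_pos h]
      have : u - (u - x) = x := by omega
      rw [this]
    · rw [if_neg h, if_neg h]
  rw [hK2, hreflB, ← Finset.sum_sub_distrib, ← Finset.sum_sub_distrib]
  apply Finset.sum_congr rfl
  intro x hx
  simp only [Finset.mem_range] at hx
  by_cases h1 : x ≤ i
  · by_cases h2 : u - x ≤ j
    · rw [if_pos ⟨h1, h2⟩, if_neg (by omega : ¬ i < x), if_neg (by omega : ¬ j < u - x)]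
      ring
    · rw [if_neg (by omega : ¬ (x ≤ i ∧ u - x ≤ j)), if_neg (by omega : ¬ i < x),
        if_pos (by omega : j < u - x)]
      ring
  · have h2 : u - x ≤ j := by omega
    rw [if_neg (by omega : ¬ (x ≤ i ∧ u - x ≤ j)), if_pos (by omega : i < x),
      if_neg (by omega : ¬ j < u - x)]
    ring

lemma tail_piece {α : ℝ} (h0 : 0 < α) (h1 : α < 1) (τ s : ℕ) :
    ∑ r ∈ Finset.range (s+1), ccoef α r *
        (∑ x ∈ Finset.range ((s-r)+1), (if τ < x then cesK α ((s-r)-x) * cesK α x else 0))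
      = if τ < s then cesK α s else 0 := by
  have step1 : ∀ r ∈ Finset.range (s+1),
      ccoef α r * (∑ x ∈ Finset.range ((s-r)+1), (if τ < x then cesK α ((s-r)-x) * cesK α x else 0))
      = ∑ x ∈ Finset.range (s+1-r), ccoef α r * (if τ < x then cesK α ((s-r)-x) * cesK α x else 0) := by
    intro r hr
    simp only [Finset.mem_range] at hr
    rw [Finset.mul_sum, show (s-r)+1 = s+1-r from by omega]
  rw [Finset.sum_congr rfl step1]
  rw [tri_comm s (fun r x => ccoef α r * (if τ < x then cesK α ((s-r)-x) * cesK α x else 0))]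
  have step2 : ∀ x ∈ Finset.range (s+1),
      ∑ r ∈ Finset.range (s+1-x), ccoef α r * (if τ < x then cesK α ((s-r)-x) * cesK α x else 0)
      = if x = s then (if τ < x then cesK α x else 0) else 0 := by
    intro x hx
    simp only [Finset.mem_range] at hx
    by_cases hτ : τ < x
    · have inner : ∀ r ∈ Finset.range (s+1-x),
          ccoef α r * (if τ < x then cesK α ((s-r)-x) * cesK α x else 0)
          = (ccoef α r * cesK α ((s-x)-r)) * cesK α x := by
        intro r hr
        simp only [Finset.mem_range] at hr
        rw [if_pos hτ, show (s-r)-x = (s-x)-r from by omega]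
        ring
      rw [Finset.sum_congr rfl inner, ← Finset.sum_mul,
        show s+1-x = (s-x)+1 from by omega, ccoef_inv_k0 h0 h1 (s-x)]
      by_cases hxs : x = s
      · rw [if_pos (by omega : s - x = 0), if_pos hxs, if_pos hτ, one_mul, hxs]
      · rw [if_neg (by omega : ¬ (s - x = 0)), if_neg hxs, zero_mul]
    · have hz : ∀ r ∈ Finset.range (s+1-x),
          ccoef α r * (if τ < x then cesK α ((s-r)-x) * cesK α x else 0) = 0 := by
        intro r _
        rw [if_neg hτ, mul_zero]
      rw [Finset.sum_congr rfl hz, Finset.sum_const, smul_zero]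
      by_cases hxs : x = s
      · rw [if_pos hxs, if_neg hτ]
      · rw [if_neg hxs]
  rw [Finset.sum_congr rfl step2]
  rw [Finset.sum_ite_eq' (Finset.range (s+1)) s (fun x => if τ < x then cesK α x else 0)]
  rw [if_pos (by simp : s ∈ Finset.range (s+1))]

lemma weyl_conv_eK {α : ℝ} (h0 : 0 < α) (h1 : α < 1) (i j n R : ℕ) (hR : i + j < R) :
    ∑ r ∈ Finset.range R, ((ccoef α r : ℝ) : ℂ) * conv (eK α i) (eK α j) (r+n)
      = ((wker α n i j : ℝ) : ℂ) := by
  by_cases hn : n ≤ i + j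
  · set s := i + j - n with hs
    have htrunc : ∑ r ∈ Finset.range R, ((ccoef α r : ℝ) : ℂ) * conv (eK α i) (eK α j) (r+n)
        = ∑ r ∈ Finset.range (s+1), ((ccoef α r : ℝ) : ℂ) * conv (eK α i) (eK α j) (r+n) := by
      symm
      apply Finset.sum_subset (Finset.range_subset_range.mpr (by omega))
      intro r hr hr2
      simp only [Finset.mem_range] at hr hr2
      rw [conv_eK_zero α i j (r+n) (by omega), mul_zero]
    rw [htrunc]
    have hterm : ∀ r ∈ Finset.range (s+1),
        ((ccoef α r : ℝ) : ℂ) * conv (eK α i) (eK α j) (r+n)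
        = ((ccoef α r * (∑ x ∈ Finset.range ((s-r)+1),
            (if x ≤ i ∧ (s-r)-x ≤ j then cesK α x * cesK α ((s-r)-x) else 0)) : ℝ) : ℂ) := by
      intro r hr
      simp only [Finset.mem_range] at hr
      rw [conv_eK i j (r+n) (by omega)]
      rw [show i + j - (r+n) = s - r from by omega]
      push_cast
      ring
    rw [Finset.sum_congr rfl hterm, ← Complex.ofReal_sum]
    congr 1
    -- real computation
    have hsplit : ∀ r ∈ Finset.range (s+1),
        ccoef α r * (∑ x ∈ Finset.range ((s-r)+1),
            (if x ≤ i ∧ (s-r)-x ≤ j then cesK α x * cesK α ((s-r)-x) else 0))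
        = ccoef α r * cesK (2*α) (s-r)
          - ccoef α r * (∑ x ∈ Finset.range ((s-r)+1), (if i < x then cesK α ((s-r)-x) * cesK α x else 0))
          - ccoef α r * (∑ x ∈ Finset.range ((s-r)+1), (if j < x then cesK α ((s-r)-x) * cesK α x else 0)) := by
      intro r hr
      simp only [Finset.mem_range] at hr
      rw [sigma_split h0 i j (s-r) (by omega)]
      ring
    rw [Finset.sum_congr rfl hsplit, Finset.sum_sub_distrib, Finset.sum_sub_distrib]
    rw [ccoef_inv_k2 h0 h1 s, tail_piece h0 h1 i s, tail_piece h0 h1 j s]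
    -- match with wker
    rw [wker, if_pos hn, ← hs]
    have e1 : (if s ≤ i then cesK α s else 0) = cesK α s - (if i < s then cesK α s else 0) := by
      by_cases h : s ≤ i
      · rw [if_pos h, if_neg (by omega)]; ring
      · rw [if_neg h, if_pos (by omega)]; ring
    have e2 : (if s ≤ j then cesK α s else 0) = cesK α s - (if j < s then cesK α s else 0) := by
      by_cases h : s ≤ j
      · rw [if_pos h, if_neg (by omega)]; ring
      · rw [if_neg h, if_pos (by omega)]; ring
    rw [e1, e2]
    ring
  · have hz : ∀ r ∈ Finset.range R, ((ccoef α r : ℝ) : ℂ) * conv (eK α i) (eK α j) (r+n) = 0 := by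
      intro r _
      rw [conv_eK_zero α i j (r+n) (by omega), mul_zero]
    rw [Finset.sum_congr rfl hz, Finset.sum_const, smul_zero, wker, if_neg (by omega)]
    norm_num

lemma master {α : ℝ} (h0 : 0 < α) (h1 : α < 1) {f g : ℕ → ℂ} {N M : ℕ}
    (hfN : ∀ m, N < m → f m = 0) (hgM : ∀ m, M < m → g m = 0) (n : ℕ) :
    weylDiff α (conv f g) n
      = ∑ i ∈ Finset.range (N+1), ∑ j ∈ Finset.range (M+1),
          weylDiff α f i * weylDiff α g j * ((wker α n i j : ℝ) : ℂ) := by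
  have hconv : ∀ m, N + M < m → conv f g m = 0 := conv_supp hfN hgM
  have hrep := weylDiff_rep h0 h1 hconv n
  rw [hrep]
  have stepB : ∀ m, conv f g m
      = ∑ i ∈ Finset.range (N+1), ∑ j ∈ Finset.range (M+1),
          (weylDiff α f i * weylDiff α g j) * conv (eK α i) (eK α j) m := by
    intro m
    rw [conv]
    have hq : ∀ q ∈ Finset.range (m+1), f (m-q) * g q
        = ∑ i ∈ Finset.range (N+1), ∑ j ∈ Finset.range (M+1),
            (weylDiff α f i * weylDiff α g j) * (eK α i (m-q) * eK α j q) := by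
      intro q _
      rw [eK_decomp h0 h1 hfN (m-q), eK_decomp h0 h1 hgM q, Finset.sum_mul_sum]
      apply Finset.sum_congr rfl
      intro i _
      apply Finset.sum_congr rfl
      intro j _
      ring
    rw [Finset.sum_congr rfl hq]
    rw [Finset.sum_comm]
    apply Finset.sum_congr rfl
    intro i _
    rw [Finset.sum_comm]
    apply Finset.sum_congr rfl
    intro j _
    rw [conv, Finset.mul_sum]
  have step2 : ∀ r ∈ Finset.range (N+M+1),
      ((ccoef α r : ℝ) : ℂ) * conv f g (r+n)
      = ∑ i ∈ Finset.range (N+1), ∑ j ∈ Finset.range (M+1),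
          (weylDiff α f i * weylDiff α g j) * (((ccoef α r : ℝ) : ℂ) * conv (eK α i) (eK α j) (r+n)) := by
    intro r _
    rw [stepB (r+n), Finset.mul_sum]
    apply Finset.sum_congr rfl
    intro i _
    rw [Finset.mul_sum]
    apply Finset.sum_congr rfl
    intro j _
    ring
  rw [Finset.sum_congr rfl step2]
  rw [Finset.sum_comm]
  apply Finset.sum_congr rfl
  intro i hi
  rw [Finset.sum_comm]
  apply Finset.sum_congr rfl
  intro j hj
  simp only [Finset.mem_range] at hi hj
  rw [← Finset.mul_sum]
  rw [weyl_conv_eK h0 h1 i j n (N+M+1) (by omega)]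

lemma qA_eq_sum {α : ℝ} (h0 : 0 < α) (h1 : α < 1) {f : ℕ → ℂ} {N : ℕ}
    (hfN : ∀ m, N < m → f m = 0) :
    qA α f = ∑ i ∈ Finset.range (N+1), cesK (α+1) i * ‖weylDiff α f i‖ := by
  rw [qA]
  apply finsum_eq_sum_of_support_subset
  intro i hi
  simp only [Function.mem_support, ne_eq] at hi
  simp only [Finset.coe_range, Set.mem_Iio]
  by_contra hc
  push_neg at hc
  have hz : weylDiff α f i = 0 := by
    rw [weylDiff_rep h0 h1 hfN i]
    apply Finset.sum_eq_zero
    intro r _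
    rw [hfN (r+i) (by omega), mul_zero]
  rw [hz] at hi
  simp at hi

lemma const_eq {α : ℝ} (h0 : 0 < α) (h1 : α < 1) :
    (2 : ℝ) ^ (α + 1) * (1 + (1 - α) / (2 * (1 + α))) ^ α - 1
      = 2*((3+α)/(1+α))^α - 1 := by
  have h2 : (1:ℝ) + (1 - α) / (2 * (1 + α)) = (3+α)/(2*(1+α)) := by
    field_simp
    ring
  rw [h2]
  have h3 : ((3+α)/(2*(1+α)) : ℝ) = ((3+α)/(1+α))/2 := by
    rw [div_div]
    ring_nf
  rw [h3, Real.div_rpow (by positivity) (by norm_num : (0:ℝ) ≤ 2)]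
  rw [Real.rpow_add (by norm_num : (0:ℝ) < 2), Real.rpow_one]
  have h4 : (2:ℝ)^α ≠ 0 := by positivity
  field_simp

theorem stmt13 (α : ℝ) (h0 : 0 < α) (h1 : α < 1) (f g : ℕ → ℂ)
    (hf : (Function.support f).Finite) (hg : (Function.support g).Finite) :
    qA α (fun n => conv f g n) ≤
      ((2 : ℝ) ^ (α + 1) * (1 + (1 - α) / (2 * (1 + α))) ^ α - 1) * qA α f * qA α g := by
  obtain ⟨N, hN⟩ := hf.bddAbove
  obtain ⟨M, hM⟩ := hg.bddAbove
  have hfN : ∀ m, N < m → f m = 0 := by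
    intro m hm
    by_contra hc
    have := hN (Function.mem_support.mpr hc)
    omega
  have hgM : ∀ m, M < m → g m = 0 := by
    intro m hm
    by_contra hc
    have := hM (Function.mem_support.mpr hc)
    omega
  have hconv : ∀ m, N + M < m → conv f g m = 0 := conv_supp hfN hgM
  set C : ℝ := 2*((3+α)/(1+α))^α - 1 with hC
  set A : ℕ → ℝ := fun i => ‖weylDiff α f i‖ with hA
  set B : ℕ → ℝ := fun j => ‖weylDiff α g j‖ with hB
  have hk1pos : ∀ m, 0 < cesK (α+1) m := cesK_pos (by positivity)
  have hCpos : 0 ≤ C := by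
    have hlam := lam_lower h0 h1
    have : (0:ℝ) < α/(1+α) := by positivity
    rw [hC]
    nlinarith
  have key : qA α (fun n => conv f g n) ≤ C * qA α f * qA α g := by
    have hqc : qA α (fun n => conv f g n)
        = ∑ n ∈ Finset.range (N+M+1), cesK (α+1) n * ‖weylDiff α (conv f g) n‖ :=
      qA_eq_sum h0 h1 hconv
    have hqf : qA α f = ∑ i ∈ Finset.range (N+1), cesK (α+1) i * A i := qA_eq_sum h0 h1 hfN
    have hqg : qA α g = ∑ j ∈ Finset.range (M+1), cesK (α+1) j * B j := qA_eq_sum h0 h1 hgM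
    rw [hqc, hqf, hqg]
    have step1 : ∀ n ∈ Finset.range (N+M+1),
        cesK (α+1) n * ‖weylDiff α (conv f g) n‖
        ≤ ∑ i ∈ Finset.range (N+1), ∑ j ∈ Finset.range (M+1),
            A i * B j * (cesK (α+1) n * |wker α n i j|) := by
      intro n _
      rw [master h0 h1 hfN hgM n]
      have habs : ‖∑ i ∈ Finset.range (N+1), ∑ j ∈ Finset.range (M+1),
            weylDiff α f i * weylDiff α g j * ((wker α n i j : ℝ) : ℂ)‖
          ≤ ∑ i ∈ Finset.range (N+1), ∑ j ∈ Finset.range (M+1),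
              A i * B j * |wker α n i j| := by
        refine le_trans (norm_sum_le _ _) ?_
        apply Finset.sum_le_sum
        intro i _
        refine le_trans (norm_sum_le _ _) ?_
        apply Finset.sum_le_sum
        intro j _
        rw [norm_mul, norm_mul, Complex.norm_real, Real.norm_eq_abs]
      calc cesK (α+1) n * ‖∑ i ∈ Finset.range (N+1), ∑ j ∈ Finset.range (M+1),
              weylDiff α f i * weylDiff α g j * ((wker α n i j : ℝ) : ℂ)‖
          ≤ cesK (α+1) n * (∑ i ∈ Finset.range (N+1), ∑ j ∈ Finset.range (M+1),
              A i * B j * |wker α n i j|) :=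
            mul_le_mul_of_nonneg_left habs (le_of_lt (hk1pos n))
        _ = ∑ i ∈ Finset.range (N+1), ∑ j ∈ Finset.range (M+1),
              A i * B j * (cesK (α+1) n * |wker α n i j|) := by
            rw [Finset.mul_sum]
            apply Finset.sum_congr rfl
            intro i _
            rw [Finset.mul_sum]
            apply Finset.sum_congr rfl
            intro j _
            ring
    have step2 : ∑ n ∈ Finset.range (N+M+1), cesK (α+1) n * ‖weylDiff α (conv f g) n‖
        ≤ ∑ n ∈ Finset.range (N+M+1), ∑ i ∈ Finset.range (N+1), ∑ j ∈ Finset.range (M+1),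
            A i * B j * (cesK (α+1) n * |wker α n i j|) := Finset.sum_le_sum step1
    refine le_trans step2 ?_
    have step3 : ∑ n ∈ Finset.range (N+M+1), ∑ i ∈ Finset.range (N+1), ∑ j ∈ Finset.range (M+1),
          A i * B j * (cesK (α+1) n * |wker α n i j|)
        = ∑ i ∈ Finset.range (N+1), ∑ j ∈ Finset.range (M+1),
            A i * B j * (∑ n ∈ Finset.range (N+M+1), cesK (α+1) n * |wker α n i j|) := by
      rw [Finset.sum_comm]
      apply Finset.sum_congr rfl
      intro i _
      rw [Finset.sum_comm]
      apply Finset.sum_congr rfl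
      intro j _
      rw [Finset.mul_sum]
    rw [step3]
    have hABnn : ∀ i j, 0 ≤ A i * B j := by
      intro i j
      apply mul_nonneg <;> simp [hA, hB, AbsoluteValue.nonneg]
    have step4 : ∑ i ∈ Finset.range (N+1), ∑ j ∈ Finset.range (M+1),
          A i * B j * (∑ n ∈ Finset.range (N+M+1), cesK (α+1) n * |wker α n i j|)
        ≤ ∑ i ∈ Finset.range (N+1), ∑ j ∈ Finset.range (M+1),
            A i * B j * (C * (cesK (α+1) i * cesK (α+1) j)) := by
      apply Finset.sum_le_sum
      intro i _
      apply Finset.sum_le_sum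
      intro j _
      exact mul_le_mul_of_nonneg_left (wbound h0 h1 i j (N+M+1)) (hABnn i j)
    refine le_trans step4 ?_
    apply le_of_eq
    rw [mul_assoc, Finset.sum_mul_sum, Finset.mul_sum]
    apply Finset.sum_congr rfl
    intro i _
    rw [Finset.mul_sum]
    apply Finset.sum_congr rfl
    intro j _
    ring
  rw [const_eq h0 h1]
  exact key
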